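/- Let g:[0,1]→[0,1] be continuous with g(0)=g(1)=0, g increasing on [0,c] and decreasing on [c,1] for some c∈(0,1), let a∈(c,1] be the unique fixed point of g in (0,1], and let a'∈[0,c] be the unique g-preimage of a in [0,c]. Let [u,v]⊆[0,1] and let f:[u,v]→[u,v] be a continuous piecewise-monotone map whose unique fixed point in [g²(c),g(c)] is a. Suppose [g²(c),g(c)]⊆[u,v], f≤g on [g²(c),a'], f≥g on [c,a], and f≤g on [a,g(c)]. Then f is more repellent from a than g on the set B=ψ_g([g²(c),g(c)]) = [g²(c),a'] ∪ [c,g(c)], and consequently I_f ⊇ I_g. -/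

import Mathlib

open Set Function

/-- The function χ_g: 1/2 where (g(x)−x)(g(g(x))−g(x)) ≤ 0, and 0 otherwise. -/
noncomputable def chi (g : ℝ → ℝ) (x : ℝ) : ℝ :=
  if (g x - x) * (g (g x) - g x) ≤ 0 then 1 / 2 else 0

/-- Over-rotation number of a periodic point `y` of `g`. -/
noncomputable def overRotNum (g : ℝ → ℝ) (y : ℝ) : ℝ :=
  (∑ i ∈ Finset.range (Function.minimalPeriod g y), chi g (g^[i] y)) /
    (Function.minimalPeriod g y : ℝ)

/-- The over-rotation interval of `g` on the domain `s`: the closure of the set of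
over-rotation numbers of periodic non-fixed points of `g` in `s`. -/
def overRotInterval (g : ℝ → ℝ) (s : Set ℝ) : Set ℝ :=
  closure { r : ℝ | ∃ y ∈ s, y ∈ Function.periodicPts g ∧ g y ≠ y ∧ overRotNum g y = r }

/-- `f` is piecewise monotone on `[a,b]`. -/
def PiecewiseMonotoneOn (f : ℝ → ℝ) (a b : ℝ) : Prop :=
  ∃ n : ℕ, ∃ t : Fin (n + 1) → ℝ, StrictMono t ∧ t 0 = a ∧ t (Fin.last n) = b ∧
    ∀ i : Fin n, MonotoneOn f (Set.Icc (t i.castSucc) (t i.succ)) ∨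
      AntitoneOn f (Set.Icc (t i.castSucc) (t i.succ))

section AuxLemmas

private lemma sum_shift_one (c : ℕ → ℝ) (p : ℕ) (hc : c p = c 0) :
    ∑ i ∈ Finset.range p, c (i + 1) = ∑ i ∈ Finset.range p, c i := by
  have h1 := Finset.sum_range_succ c p
  have h2 := Finset.sum_range_succ' c p
  rw [hc] at h1
  linarith

private lemma sum_shift (c : ℕ → ℝ) (p : ℕ) (hc : ∀ i, c (i + p) = c i) :
    ∀ k, ∑ i ∈ Finset.range p, c (i + k) = ∑ i ∈ Finset.range p, c i := by
  intro k
  induction k with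
  | zero => simp
  | succ k ih =>
    have h1 : ∑ i ∈ Finset.range p, c (i + (k+1))
        = ∑ i ∈ Finset.range p, (fun j => c (j + k)) (i + 1) := by
      apply Finset.sum_congr rfl
      intro i _
      simp only []
      congr 1
      omega
    have hc' : (fun j => c (j + k)) p = (fun j => c (j + k)) 0 := by
      simp only [Nat.zero_add]
      rw [show p + k = k + p by omega]
      exact hc k
    have h2 := sum_shift_one (fun j => c (j + k)) p hc'
    rw [h1, h2]
    exact ih

private lemma sum_block (c : ℕ → ℝ) : ∀ (A B : ℕ), ∑ i ∈ Finset.range (A + B), c i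
    = ∑ i ∈ Finset.range A, c i + ∑ i ∈ Finset.range B, c (A + i) := by
  intro A B
  induction B with
  | zero => simp
  | succ B ih =>
    rw [Nat.add_succ, Finset.sum_range_succ, ih, Finset.sum_range_succ]
    ring

private lemma periodic_ext (c : ℕ → ℝ) (q : ℕ) (hc : ∀ i, c (i + q) = c i) :
    ∀ m i, c (i + m * q) = c i := by
  intro m
  induction m with
  | zero => simp
  | succ m ih =>
    intro i
    have h : i + (m+1) * q = (i + m * q) + q := by ring
    rw [h, hc, ih]

private lemma sum_mul_period (c : ℕ → ℝ) (q : ℕ) (hc : ∀ i, c (i + q) = c i) :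
    ∀ m, ∑ i ∈ Finset.range (m * q), c i = m * ∑ i ∈ Finset.range q, c i := by
  intro m
  induction m with
  | zero => simp
  | succ m ih =>
    have h1 : (m + 1) * q = m * q + q := by ring
    rw [h1, sum_block, ih]
    have h2 : ∀ i ∈ Finset.range q, c (m * q + i) = c i := by
      intro i _
      rw [show m * q + i = i + m * q by ring, periodic_ext c q hc]
    rw [Finset.sum_congr rfl h2]
    push_cast
    ring

private lemma prod_nonpos_iff {d1 d2 : ℝ} {P1 P2 : Prop}
    (h1 : 0 < d1 ↔ P1) (h1' : d1 ≠ 0) (h2 : 0 < d2 ↔ P2) (h2' : d2 ≠ 0) :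
    (d1 * d2 ≤ 0 ↔ ¬(P1 ↔ P2)) := by
  rcases h1'.lt_or_gt with hn1 | hp1
  · have np1 : ¬P1 := fun p => absurd (h1.mpr p) (by linarith)
    rcases h2'.lt_or_gt with hn2 | hp2
    · have np2 : ¬P2 := fun p => absurd (h2.mpr p) (by linarith)
      constructor
      · intro h; exfalso; nlinarith
      · intro h; exact absurd ⟨fun p => absurd p np1, fun p => absurd p np2⟩ h
    · have p2 : P2 := h2.mp hp2
      constructor
      · intro _ hiff; exact np1 (hiff.mpr p2)
      · intro _; nlinarith
  · have p1 : P1 := h1.mp hp1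
    rcases h2'.lt_or_gt with hn2 | hp2
    · have np2 : ¬P2 := fun p => absurd (h2.mpr p) (by linarith)
      constructor
      · intro _ hiff; exact np2 (hiff.mp p1)
      · intro _; nlinarith
    · have p2 : P2 := h2.mp hp2
      constructor
      · intro h; exfalso; nlinarith
      · intro h; exact absurd ⟨fun _ => p2, fun _ => p1⟩ h

private lemma chi_half_of_two_cycle {f : ℝ → ℝ} {z : ℝ} (h : f (f z) = z) :
    chi f z = 1/2 ∧ chi f (f z) = 1/2 := by
  constructor
  · have hcond : (f z - z) * (f (f z) - f z) ≤ 0 := by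
      rw [h]
      nlinarith [sq_nonneg (f z - z)]
    unfold chi
    rw [if_pos hcond]
  · have hcond : (f (f z) - f z) * (f (f (f z)) - f (f z)) ≤ 0 := by
      rw [h]
      nlinarith [sq_nonneg (f z - z)]
    unfold chi
    rw [if_pos hcond]

private lemma chi_eq_chi {F G : ℝ → ℝ} {x y : ℝ}
    (h : ((F x - x) * (F (F x) - F x) ≤ 0) ↔ ((G y - y) * (G (G y) - G y) ≤ 0)) :
    chi F x = chi G y := by
  unfold chi
  by_cases hh : (G y - y) * (G (G y) - G y) ≤ 0
  · rw [if_pos hh, if_pos (h.mpr hh)]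
  · rw [if_neg hh, if_neg (fun hc => hh (h.mp hc))]

private lemma core0 {h : ℝ → ℝ} {x1 x2 l r : ℝ} (hx : x1 ≤ x2)
    (hcont : ContinuousOn h (Icc x1 x2)) (h1 : h x1 = l) (h2 : h x2 = r) (hlr : l ≤ r) :
    ∃ A B, x1 ≤ A ∧ A ≤ B ∧ B ≤ x2 ∧ h A = l ∧ h B = r ∧ (h '' Icc A B) ⊆ Icc l r := by
  rcases eq_or_lt_of_le hlr with heq | hlt
  · refine ⟨x2, x2, hx, le_refl _, le_refl _, by rw [h2, ← heq], h2, ?_⟩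
    rw [Icc_self]
    rintro _ ⟨t, ht, rfl⟩
    simp only [mem_singleton_iff] at ht
    subst ht
    rw [h2]
    exact ⟨hlr, le_refl r⟩
  · set S := Icc x1 x2 ∩ h ⁻¹' {l} with hS
    have hScl : IsClosed S :=
      hcont.preimage_isClosed_of_isClosed isClosed_Icc isClosed_singleton
    have hSne : S.Nonempty := ⟨x1, ⟨le_refl _, hx⟩, h1⟩
    have hScp : IsCompact S := isCompact_Icc.of_isClosed_subset hScl inter_subset_left
    set A := sSup S with hA
    have hAS : A ∈ S := hScp.sSup_mem hSne
    have hAmax : ∀ t ∈ S, t ≤ A := fun t ht => le_csSup hScp.bddAbove ht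
    obtain ⟨⟨hAx1, hAx2⟩, hAl⟩ := hAS
    simp only [mem_preimage, mem_singleton_iff] at hAl
    set T := Icc A x2 ∩ h ⁻¹' {r} with hT
    have hTcl : IsClosed T :=
      (hcont.mono (Icc_subset_Icc hAx1 le_rfl)).preimage_isClosed_of_isClosed
        isClosed_Icc isClosed_singleton
    have hTne : T.Nonempty := ⟨x2, ⟨hAx2, le_refl _⟩, h2⟩
    have hTcp : IsCompact T := isCompact_Icc.of_isClosed_subset hTcl inter_subset_left
    set B := sInf T with hB
    have hBT : B ∈ T := hTcp.sInf_mem hTne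
    have hBmin : ∀ t ∈ T, B ≤ t := fun t ht => csInf_le hTcp.bddBelow ht
    obtain ⟨⟨hBA, hBx2⟩, hBr⟩ := hBT
    simp only [mem_preimage, mem_singleton_iff] at hBr
    refine ⟨A, B, hAx1, hBA, hBx2, hAl, hBr, ?_⟩
    rintro _ ⟨t, ⟨htA, htB⟩, rfl⟩
    constructor
    · by_contra hlt'
      push_neg at hlt'
      have hcont2 : ContinuousOn h (Icc t B) :=
        hcont.mono (Icc_subset_Icc (hAx1.trans htA) hBx2)
      have hmem : l ∈ Icc (h t) (h B) := ⟨hlt'.le, by rw [hBr]; exact hlr⟩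
      obtain ⟨s, hs, hsl⟩ := intermediate_value_Icc htB hcont2 hmem
      have hsS : s ∈ S := ⟨⟨hAx1.trans (htA.trans hs.1), hs.2.trans hBx2⟩, hsl⟩
      have hsA : s ≤ A := hAmax s hsS
      have htA' : t = A := le_antisymm (hs.1.trans hsA) htA
      rw [htA', hAl] at hlt'
      exact lt_irrefl l hlt'
    · by_contra hlt'
      push_neg at hlt'
      have hcont2 : ContinuousOn h (Icc A t) :=
        hcont.mono (Icc_subset_Icc hAx1 (htB.trans hBx2))
      have hmem : r ∈ Icc (h A) (h t) := ⟨by rw [hAl]; exact hlr, hlt'.le⟩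
      obtain ⟨s, hs, hsr⟩ := intermediate_value_Icc htA hcont2 hmem
      have hsT : s ∈ T := ⟨⟨hs.1, (hs.2.trans htB).trans hBx2⟩, hsr⟩
      have hsB : B ≤ s := hBmin s hsT
      have htB' : t = B := le_antisymm htB (hsB.trans hs.2)
      rw [htB', hBr] at hlt'
      exact lt_irrefl r hlt'

private lemma core {h : ℝ → ℝ} {A B l r : ℝ} (hAB : A ≤ B)
    (hcont : ContinuousOn h (Icc A B)) (hlr : l ≤ r)
    (hl : l ∈ uIcc (h A) (h B)) (hr : r ∈ uIcc (h A) (h B)) :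
    ∃ A' B', A ≤ A' ∧ A' ≤ B' ∧ B' ≤ B ∧
      ((h A' = l ∧ h B' = r) ∨ (h A' = r ∧ h B' = l)) ∧ h '' Icc A' B' ⊆ Icc l r := by
  have hIcc : uIcc A B = Icc A B := uIcc_of_le hAB
  have hcont' : ContinuousOn h (uIcc A B) := by rw [hIcc]; exact hcont
  obtain ⟨x1, hx1, hx1v⟩ := intermediate_value_uIcc hcont' hl
  obtain ⟨x2, hx2, hx2v⟩ := intermediate_value_uIcc hcont' hr
  rw [hIcc] at hx1 hx2
  rcases le_total x1 x2 with hord | hord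
  · obtain ⟨A', B', h1, h2, h3, h4, h5, h6⟩ :=
      core0 hord (hcont.mono (Icc_subset_Icc hx1.1 hx2.2)) hx1v hx2v hlr
    exact ⟨A', B', hx1.1.trans h1, h2, h3.trans hx2.2, Or.inl ⟨h4, h5⟩, h6⟩
  · set φ : ℝ → ℝ := fun t => x2 + x1 - t with hφ
    have hφcont : Continuous φ := by fun_prop
    have hcont2 : ContinuousOn (h ∘ φ) (Icc x2 x1) := by
      apply ContinuousOn.comp (hcont.mono (Icc_subset_Icc hx2.1 hx1.2)) hφcont.continuousOn
      intro t ht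
      exact ⟨by simp only [hφ]; linarith [ht.2], by simp only [hφ]; linarith [ht.1]⟩
    have e1 : (h ∘ φ) x2 = l := by
      simp only [comp_apply, hφ]
      rw [show x2 + x1 - x2 = x1 by ring]
      exact hx1v
    have e2 : (h ∘ φ) x1 = r := by
      simp only [comp_apply, hφ]
      rw [show x2 + x1 - x1 = x2 by ring]
      exact hx2v
    obtain ⟨A'', B'', h1, h2, h3, h4, h5, h6⟩ := core0 hord hcont2 e1 e2 hlr
    refine ⟨x2 + x1 - B'', x2 + x1 - A'', by linarith [hx2.1], by linarith,
      by linarith [hx1.2], Or.inr ⟨?_, ?_⟩, ?_⟩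
    · have e : (h ∘ φ) B'' = h (x2 + x1 - B'') := rfl
      rw [← e, h5]
    · have e : (h ∘ φ) A'' = h (x2 + x1 - A'') := rfl
      rw [← e, h4]
    · rintro _ ⟨t, ht, rfl⟩
      have e : (h ∘ φ) (x2 + x1 - t) = h t := by
        simp only [comp_apply, hφ]
        congr 1
        ring
      rw [← e]
      apply h6
      exact ⟨x2 + x1 - t, ⟨by linarith [ht.2], by linarith [ht.1]⟩, rfl⟩

private lemma iter_maps {f : ℝ → ℝ} {u v : ℝ} (hm : MapsTo f (Icc u v) (Icc u v)) :
    ∀ n, MapsTo (f^[n]) (Icc u v) (Icc u v) := fun n => hm.iterate n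

private lemma iter_cont {f : ℝ → ℝ} {u v : ℝ} (hf : ContinuousOn f (Icc u v))
    (hm : MapsTo f (Icc u v) (Icc u v)) : ∀ n, ContinuousOn (f^[n]) (Icc u v) := by
  intro n
  induction n with
  | zero => simpa using continuousOn_id
  | succ n ih =>
    rw [Function.iterate_succ']
    exact hf.comp ih (iter_maps hm n)

private lemma chain {f : ℝ → ℝ} {u v : ℝ} (hf : ContinuousOn f (Icc u v))
    (hm : MapsTo f (Icc u v) (Icc u v)) (p : ℕ) (hp : 0 < p) (V : ℕ → ℝ × ℝ)
    (hwf : ∀ j, j ≤ p → (V j).1 ≤ (V j).2)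
    (hsub : ∀ j, j ≤ p → Icc (V j).1 (V j).2 ⊆ Icc u v)
    (hVp : V p = V 0)
    (hcov : ∀ j, j < p → Icc (V (j+1)).1 (V (j+1)).2 ⊆ uIcc (f (V j).1) (f (V j).2)) :
    ∃ z, f^[p] z = z ∧ ∀ j, j ≤ p → f^[j] z ∈ Icc (V j).1 (V j).2 := by
  have main : ∀ k, k ≤ p → ∃ A B, A ≤ B ∧ Icc A B ⊆ Icc (V 0).1 (V 0).2 ∧
      (∀ j, j ≤ k → f^[j] '' Icc A B ⊆ Icc (V j).1 (V j).2) ∧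
      ((f^[k] A = (V k).1 ∧ f^[k] B = (V k).2) ∨
        (f^[k] A = (V k).2 ∧ f^[k] B = (V k).1)) := by
    intro k
    induction k with
    | zero =>
      intro _
      refine ⟨(V 0).1, (V 0).2, hwf 0 (by omega), subset_rfl, ?_, Or.inl ⟨rfl, rfl⟩⟩
      intro j hj
      interval_cases j
      simp only [Function.iterate_zero, Set.image_id]
      exact subset_rfl
    | succ k ih =>
      intro hk1
      obtain ⟨A, B, hAB, hABsub, hit, hend⟩ := ih (by omega)
      have hkp : k < p := by omega
      have hABuv : Icc A B ⊆ Icc u v := hABsub.trans (hsub 0 (by omega))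
      have hcont : ContinuousOn (f^[k+1]) (Icc A B) :=
        (iter_cont hf hm (k+1)).mono hABuv
      have hA' : f^[k+1] A = f (f^[k] A) := Function.iterate_succ_apply' f k A
      have hB' : f^[k+1] B = f (f^[k] B) := Function.iterate_succ_apply' f k B
      have hucc : uIcc (f^[k+1] A) (f^[k+1] B) = uIcc (f (V k).1) (f (V k).2) := by
        rcases hend with ⟨e1, e2⟩ | ⟨e1, e2⟩
        · rw [hA', hB', e1, e2]
        · rw [hA', hB', e1, e2, uIcc_comm]
      have hwf1 := hwf (k+1) hk1
      have hl : (V (k+1)).1 ∈ uIcc (f^[k+1] A) (f^[k+1] B) := by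
        rw [hucc]
        exact hcov k hkp ⟨le_refl _, hwf1⟩
      have hr : (V (k+1)).2 ∈ uIcc (f^[k+1] A) (f^[k+1] B) := by
        rw [hucc]
        exact hcov k hkp ⟨hwf1, le_refl _⟩
      obtain ⟨A', B', g1, g2, g3, g4, g5⟩ := core hAB hcont hwf1 hl hr
      refine ⟨A', B', g2, (Icc_subset_Icc g1 g3).trans hABsub, ?_, g4⟩
      intro j hj
      rcases Nat.lt_or_ge j (k+1) with hj' | hj'
      · exact (Set.image_mono (Icc_subset_Icc g1 g3)).trans (hit j (by omega))
      · have : j = k + 1 := by omega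
        subst this
        exact g5
  obtain ⟨A, B, hAB, hABsub, hit, hend⟩ := main p (le_refl p)
  have hcontp : ContinuousOn (fun t => f^[p] t - t) (Icc A B) := by
    apply ContinuousOn.sub
    · exact (iter_cont hf hm p).mono (hABsub.trans (hsub 0 (by omega)))
    · exact continuousOn_id
  have hAmem : A ∈ Icc (V 0).1 (V 0).2 := hABsub ⟨le_refl _, hAB⟩
  have hBmem : B ∈ Icc (V 0).1 (V 0).2 := hABsub ⟨hAB, le_refl _⟩
  rw [hVp] at hend
  have hzero : ∃ z ∈ Icc A B, f^[p] z - z = 0 := by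
    rcases hend with ⟨e1, e2⟩ | ⟨e1, e2⟩
    · have h1 : f^[p] A - A ≤ 0 := by rw [e1]; linarith [hAmem.1]
      have h2 : 0 ≤ f^[p] B - B := by rw [e2]; linarith [hBmem.2]
      obtain ⟨z, hz, hz0⟩ := intermediate_value_Icc hAB hcontp ⟨h1, h2⟩
      exact ⟨z, hz, hz0⟩
    · have h1 : 0 ≤ f^[p] A - A := by rw [e1]; linarith [hAmem.2]
      have h2 : f^[p] B - B ≤ 0 := by rw [e2]; linarith [hBmem.1]
      obtain ⟨z, hz, hz0⟩ := intermediate_value_Icc' hAB hcontp ⟨h2, h1⟩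
      exact ⟨z, hz, hz0⟩
  obtain ⟨z, hz, hz0⟩ := hzero
  have hz0' : f^[p] z - z = 0 := hz0
  refine ⟨z, by linarith, ?_⟩
  intro j hj
  exact hit j hj ⟨z, hz, rfl⟩

private lemma BC {f : ℝ → ℝ} {u v : ℝ} (hf : ContinuousOn f (Icc u v))
    (hm : MapsTo f (Icc u v) (Icc u v)) {x : ℝ} (hx : x ∈ Icc u v)
    (hfx : x < f x) (hffx : f (f x) ≤ x) :
    ∃ z ∈ Icc u v, f (f z) = z ∧ f z ≠ z := by
  have hffcont : ContinuousOn (f ∘ f) (Icc u v) := hf.comp hf hm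
  rcases eq_or_lt_of_le hffx with heq | hlt
  · exact ⟨x, hx, heq, fun h => lt_irrefl x (by nlinarith [hfx])⟩
  · have hfxuv : f x ∈ Icc u v := hm hx
    have hvuv : v ∈ Icc u v := ⟨hx.1.trans hx.2, le_refl v⟩
    set Bs := Icc x v ∩ (fun t => f t - t) ⁻¹' (Iic 0) with hBsdef
    have hBcl : IsClosed Bs := by
      apply ContinuousOn.preimage_isClosed_of_isClosed _ isClosed_Icc isClosed_Iic
      exact ((hf.mono (Icc_subset_Icc hx.1 le_rfl)).sub continuousOn_id)
    have hBne : Bs.Nonempty := ⟨v, ⟨hx.2, le_refl v⟩, by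
      simp only [mem_preimage, mem_Iic, sub_nonpos]
      exact (hm hvuv).2⟩
    have hBcp : IsCompact Bs := isCompact_Icc.of_isClosed_subset hBcl inter_subset_left
    set b := sInf Bs with hbdef
    have hbB : b ∈ Bs := hBcp.sInf_mem hBne
    have hbmin : ∀ t ∈ Bs, b ≤ t := fun t ht => csInf_le hBcp.bddBelow ht
    obtain ⟨⟨hbx, hbv⟩, hbf⟩ := hbB
    simp only [mem_preimage, mem_Iic, sub_nonpos] at hbf
    have hbuv : b ∈ Icc u v := ⟨hx.1.trans hbx, hbv⟩
    have hbx' : x < b := by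
      rcases eq_or_lt_of_le hbx with h | h
      · exfalso; rw [← h] at hbf; linarith
      · exact h
    have hbfix : f b = b := by
      rcases eq_or_lt_of_le hbf with h | h
      · exact h
      · exfalso
        have hcont' : ContinuousOn (fun t => f t - t) (Icc x b) :=
          (hf.mono (Icc_subset_Icc hx.1 hbv)).sub continuousOn_id
        have h0 : (0:ℝ) ∈ Icc (f b - b) (f x - x) := ⟨by linarith, by linarith⟩
        obtain ⟨s, hs, hs0⟩ := intermediate_value_Icc' hbx hcont' h0
        have hs0' : f s - s = 0 := hs0
        have hsB : s ∈ Bs := ⟨⟨hs.1, hs.2.trans hbv⟩, by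
          simp only [mem_preimage, mem_Iic]; linarith⟩
        have := hbmin s hsB
        have hsb : s = b := le_antisymm hs.2 this
        rw [hsb] at hs0'; linarith
    have hbfx : b ≤ f x := hbmin (f x) ⟨⟨hfx.le, hfxuv.2⟩, by
      simp only [mem_preimage, mem_Iic]; linarith⟩
    set Ds := Icc b v ∩ (fun t => f t) ⁻¹' (Iic x) with hDdef
    have hDcl : IsClosed Ds := by
      apply ContinuousOn.preimage_isClosed_of_isClosed _ isClosed_Icc isClosed_Iic
      exact hf.mono (Icc_subset_Icc hbuv.1 le_rfl)
    have hDne : Ds.Nonempty := ⟨f x, ⟨hbfx, hfxuv.2⟩, by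
      simp only [mem_preimage, mem_Iic]; exact hffx⟩
    have hDcp : IsCompact Ds := isCompact_Icc.of_isClosed_subset hDcl inter_subset_left
    set d := sInf Ds with hddef
    have hdD : d ∈ Ds := hDcp.sInf_mem hDne
    have hdmin : ∀ t ∈ Ds, d ≤ t := fun t ht => csInf_le hDcp.bddBelow ht
    obtain ⟨⟨hdb, hdv⟩, hdf⟩ := hdD
    simp only [mem_preimage, mem_Iic] at hdf
    have hduv : d ∈ Icc u v := ⟨hbuv.1.trans hdb, hdv⟩
    have hdb' : b < d := by
      rcases eq_or_lt_of_le hdb with h | h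
      · exfalso; rw [← h] at hdf; rw [hbfix] at hdf; linarith
      · exact h
    have hdfx : f d = x := by
      rcases eq_or_lt_of_le hdf with h | h
      · exact h
      · exfalso
        have hcont' : ContinuousOn (fun t => f t) (Icc b d) :=
          hf.mono (Icc_subset_Icc hbuv.1 hdv)
        have h0 : x ∈ Icc (f d) (f b) := ⟨hdf, by rw [hbfix]; linarith⟩
        obtain ⟨s, hs, hs0⟩ := intermediate_value_Icc' hdb hcont' h0
        have hs0' : f s = x := hs0
        have hsD : s ∈ Ds := ⟨⟨hs.1, hs.2.trans hdv⟩, by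
          simp only [mem_preimage, mem_Iic]; linarith⟩
        have := hdmin s hsD
        have hsd : s = d := le_antisymm hs.2 this
        rw [hsd] at hs0'
        linarith
    have hfxd : d ≤ f x := hdmin (f x) ⟨⟨hbfx, hfxuv.2⟩, by
      simp only [mem_preimage, mem_Iic]; exact hffx⟩
    rcases eq_or_lt_of_le hfxd with hcase | hcase
    · refine ⟨d, hduv, by rw [hdfx, ← hcase], ?_⟩
      rw [hdfx]
      intro h
      rw [h] at hbx'
      linarith
    · set Fs := Icc d v ∩ (fun t => f t - t) ⁻¹' ({0} : Set ℝ) with hFdef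
      have hFcl : IsClosed Fs := by
        apply ContinuousOn.preimage_isClosed_of_isClosed _ isClosed_Icc isClosed_singleton
        exact (hf.mono (Icc_subset_Icc hduv.1 le_rfl)).sub continuousOn_id
      rcases Fs.eq_empty_or_nonempty with hFe | hFne
      · have hθcont : ContinuousOn (fun t => f (f t) - t) (Icc d v) :=
          (hffcont.mono (Icc_subset_Icc hduv.1 le_rfl)).sub continuousOn_id
        have hθd : 0 < f (f d) - d := by rw [hdfx]; linarith
        have hθv : f (f v) - v ≤ 0 := by
          have := (hm (hm hvuv)).2
          linarith
        obtain ⟨z, hz, hz0⟩ := intermediate_value_Icc' hdv hθcont ⟨hθv, hθd.le⟩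
        have hz0' : f (f z) - z = 0 := hz0
        refine ⟨z, ⟨hduv.1.trans hz.1, hz.2⟩, by linarith, ?_⟩
        intro hfixz
        have : z ∈ Fs := ⟨hz, by simp only [mem_preimage, mem_singleton_iff]; linarith⟩
        rw [hFe] at this
        exact absurd this (Set.notMem_empty z)
      · set σ := sInf Fs with hσdef
        have hFcp : IsCompact Fs := isCompact_Icc.of_isClosed_subset hFcl inter_subset_left
        have hσF : σ ∈ Fs := hFcp.sInf_mem hFne
        have hσmin : ∀ t ∈ Fs, σ ≤ t := fun t ht => csInf_le hFcp.bddBelow ht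
        obtain ⟨⟨hσd, hσv⟩, hσfix⟩ := hσF
        simp only [mem_preimage, mem_singleton_iff] at hσfix
        have hσfix' : f σ = σ := by linarith
        have hσd' : d < σ := by
          rcases eq_or_lt_of_le hσd with h | h
          · exfalso; rw [← h] at hσfix'; rw [hdfx] at hσfix'; linarith
          · exact h
        have hcont' : ContinuousOn f (Icc d σ) := hf.mono (Icc_subset_Icc hduv.1 hσv)
        have hmem : d ∈ Icc (f d) (f σ) := ⟨by rw [hdfx]; linarith, by rw [hσfix']; linarith⟩
        obtain ⟨t₀, ht₀, ht₀v⟩ := intermediate_value_Icc hσd'.le hcont' hmem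
        have ht₀σ : t₀ < σ := by
          rcases eq_or_lt_of_le ht₀.2 with h | h
          · exfalso; rw [h, hσfix'] at ht₀v; linarith
          · exact h
        have hθcont : ContinuousOn (fun t => f (f t) - t) (Icc d t₀) :=
          (hffcont.mono (Icc_subset_Icc hduv.1 (ht₀.2.trans hσv))).sub continuousOn_id
        have hθd : 0 < f (f d) - d := by rw [hdfx]; linarith
        have hθt₀ : f (f t₀) - t₀ < 0 := by
          rw [ht₀v, hdfx]
          have : d ≤ t₀ := ht₀.1
          linarith
        obtain ⟨z, hz, hz0⟩ := intermediate_value_Icc' ht₀.1 hθcont ⟨hθt₀.le, hθd.le⟩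
        have hz0' : f (f z) - z = 0 := hz0
        refine ⟨z, ⟨hduv.1.trans hz.1, (hz.2.trans ht₀.2).trans hσv⟩, by linarith, ?_⟩
        intro hfixz
        have hzF : z ∈ Fs := ⟨⟨hz.1, (hz.2.trans ht₀.2).trans hσv⟩, by
          simp only [mem_preimage, mem_singleton_iff]; linarith⟩
        have h1 := hσmin z hzF
        have h2 : σ ≤ t₀ := h1.trans hz.2
        linarith

end AuxLemmas

theorem stmt8 (g f : ℝ → ℝ) (c a a' u v : ℝ)
    (hg : ContinuousOn g (Set.Icc 0 1)) (hgm : Set.MapsTo g (Set.Icc 0 1) (Set.Icc 0 1))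
    (hg0 : g 0 = 0) (hg1 : g 1 = 0) (hc : c ∈ Set.Ioo (0:ℝ) 1)
    (hmono : StrictMonoOn g (Set.Icc 0 c)) (hanti : StrictAntiOn g (Set.Icc c 1))
    (ha : a ∈ Set.Ioc c 1) (hga : g a = a)
    (hauniq : ∀ x ∈ Set.Ioc (0:ℝ) 1, g x = x → x = a)
    (ha' : a' ∈ Set.Icc (0:ℝ) c) (hga' : g a' = a)
    (ha'uniq : ∀ x ∈ Set.Icc (0:ℝ) c, g x = a → x = a')
    (huv : Set.Icc u v ⊆ Set.Icc (0:ℝ) 1) (huv' : u ≤ v)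
    (hsub : Set.Icc (g (g c)) (g c) ⊆ Set.Icc u v)
    (hf : ContinuousOn f (Set.Icc u v)) (hfm : Set.MapsTo f (Set.Icc u v) (Set.Icc u v))
    (hfpm : PiecewiseMonotoneOn f u v)
    (hfa : f a = a) (hfuniq : ∀ x ∈ Set.Icc (g (g c)) (g c), f x = x → x = a)
    (h1 : ∀ x ∈ Set.Icc (g (g c)) a', f x ≤ g x)
    (h2 : ∀ x ∈ Set.Icc c a, g x ≤ f x)
    (h3 : ∀ x ∈ Set.Icc a (g c), f x ≤ g x) :
    -- f is more repellent from a than g on B = ψ_g([g²(c), g(c)]) = [g²(c), a'] ∪ [c, g(c)] …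
    (∀ x ∈ Set.Icc (g (g c)) a' ∪ Set.Icc c (g c),
        Set.uIcc (g x) a ⊆ Set.uIcc (f x) a) ∧
    -- … and consequently I_f ⊇ I_g
    overRotInterval g (Set.Icc 0 1) ⊆ overRotInterval f (Set.Icc u v) := by
  obtain ⟨hc0, hc1⟩ := hc
  obtain ⟨hca, ha1⟩ := ha
  have haIcc : a ∈ Icc c 1 := ⟨hca.le, ha1⟩
  have hcIcc : c ∈ Icc c 1 := ⟨le_refl c, hc1.le⟩
  have hgc_gt_a : a < g c := by
    have := hanti hcIcc haIcc hca
    rwa [hga] at this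
  have hgc01 : g c ∈ Icc (0:ℝ) 1 := hgm ⟨hc0.le, hc1.le⟩
  have hgcIcc : g c ∈ Icc c 1 := ⟨(hca.trans hgc_gt_a).le, hgc01.2⟩
  have hg2c_lt_a : g (g c) < a := by
    have := hanti haIcc hgcIcc hgc_gt_a
    rwa [hga] at this
  have hg2c01 : g (g c) ∈ Icc (0:ℝ) 1 := hgm hgc01
  have hg2c0 : (0:ℝ) ≤ g (g c) := hg2c01.1
  have hg2gc : g (g c) < g c := hg2c_lt_a.trans hgc_gt_a
  have ha'c : a' < c := by
    rcases eq_or_lt_of_le ha'.2 with h | h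
    · exfalso
      rw [h] at hga'
      linarith
    · exact h
  have ha1' : a < 1 := by
    rcases eq_or_lt_of_le ha1 with h | h
    · exfalso
      rw [h] at hga
      rw [hg1] at hga
      linarith
    · exact h
  have huv0 : (0:ℝ) ≤ u := (huv ⟨le_refl u, huv'⟩).1
  have hv1 : v ≤ 1 := (huv ⟨huv', le_refl v⟩).2
  have hug2c : u ≤ g (g c) := (hsub ⟨le_refl _, hg2gc.le⟩).1
  have hgcv : g c ≤ v := (hsub ⟨hg2gc.le, le_refl _⟩).2
  have hauv : a ∈ Icc u v := hsub ⟨hg2c_lt_a.le, hgc_gt_a.le⟩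
  -- sign of (g - id) on each side of a
  have hgne : ∀ s, 0 < s → s < a → g s ≠ s := by
    intro s h0 hsa h
    have := hauniq s ⟨h0, by linarith⟩ h
    linarith
  have hgne' : ∀ s, a < s → s ≤ 1 → g s ≠ s := by
    intro s h0 hs1 h
    have := hauniq s ⟨by linarith, hs1⟩ h
    linarith
  have signg_left : ∀ t, 0 < t → t < a → t < g t := by
    intro t ht0 hta
    by_contra hcon
    push_neg at hcon
    have hgt : g t < t := lt_of_le_of_ne hcon (hgne t ht0 hta)
    have hgcc : c < g c := hca.trans hgc_gt_a
    rcases le_total t c with h | h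
    · have hcont' : ContinuousOn (fun s => g s - s) (Icc t c) :=
        (hg.mono (Icc_subset_Icc ht0.le hc1.le)).sub continuousOn_id
      obtain ⟨s, hs, hs0⟩ := intermediate_value_Icc h hcont'
        (show (0:ℝ) ∈ Icc (g t - t) (g c - c) from ⟨by linarith, by linarith⟩)
      have hs0' : g s - s = 0 := hs0
      exact hgne s (by linarith [hs.1]) (by linarith [hs.2, hca]) (by linarith)
    · have hcont' : ContinuousOn (fun s => g s - s) (Icc c t) :=
        (hg.mono (Icc_subset_Icc hc0.le (by linarith))).sub continuousOn_id
      obtain ⟨s, hs, hs0⟩ := intermediate_value_Icc' h hcont'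
        (show (0:ℝ) ∈ Icc (g t - t) (g c - c) from ⟨by linarith, by linarith⟩)
      have hs0' : g s - s = 0 := hs0
      exact hgne s (by linarith [hs.1]) (by linarith [hs.2]) (by linarith)
  have signg_right : ∀ t, a < t → t ≤ 1 → g t < t := by
    intro t hat ht1
    by_contra hcon
    push_neg at hcon
    have hgt : t < g t := lt_of_le_of_ne hcon (Ne.symm (hgne' t hat ht1))
    have hcont' : ContinuousOn (fun s => g s - s) (Icc t 1) :=
      (hg.mono (Icc_subset_Icc (by linarith) le_rfl)).sub continuousOn_id
    obtain ⟨s, hs, hs0⟩ := intermediate_value_Icc' ht1 hcont'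
      (show (0:ℝ) ∈ Icc (g 1 - 1) (g t - t) from ⟨by rw [hg1]; linarith, by linarith⟩)
    have hs0' : g s - s = 0 := hs0
    exact hgne' s (by linarith [hs.1]) hs.2 (by linarith)
  constructor
  · -- Part 1
    rintro x (hx | hx)
    · have hx0 : (0:ℝ) ≤ x := hg2c0.trans hx.1
      have hgxa : g x ≤ a := by
        rcases eq_or_lt_of_le hx.2 with h | h
        · rw [h, hga']
        · have := hmono ⟨hx0, hx.2.trans ha'.2⟩ ⟨ha'.1, ha'.2⟩ h
          rw [hga'] at this
          exact this.le
      have hfx := h1 x hx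
      rw [uIcc_of_le hgxa, uIcc_of_le (hfx.trans hgxa)]
      exact Icc_subset_Icc hfx le_rfl
    · rcases le_total x a with hxa | hxa
      · have hgxa : a ≤ g x := by
          rcases eq_or_lt_of_le hxa with h | h
          · rw [h, hga]
          · have := hanti ⟨hx.1, hx.2.trans hgc01.2⟩ haIcc h
            rw [hga] at this
            exact this.le
        have hfx := h2 x ⟨hx.1, hxa⟩
        rw [uIcc_of_ge hgxa, uIcc_of_ge (hgxa.trans hfx)]
        exact Icc_subset_Icc le_rfl hfx
      · have hgxa : g x ≤ a := by
          rcases eq_or_lt_of_le hxa with h | h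
          · rw [← h, hga]
          · have := hanti haIcc ⟨hca.le.trans hxa, hx.2.trans hgc01.2⟩ h
            rw [hga] at this
            exact this.le
        have hfx := h3 x ⟨hxa, hx.2⟩
        rw [uIcc_of_le hgxa, uIcc_of_le (hfx.trans hgxa)]
        exact Icc_subset_Icc hfx le_rfl
  · -- Part 2
    apply closure_mono
    rintro r ⟨y, hy01, hyper, hgy, hrot⟩
    set p := Function.minimalPeriod g y with hpdef
    have hppos : 0 < p := Function.minimalPeriod_pos_of_mem_periodicPts hyper
    have hp1 : p ≠ 1 := fun h => hgy (Function.minimalPeriod_eq_one_iff_isFixedPt.mp h)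
    have hYper : g^[p] y = y := Function.iterate_minimalPeriod
    set Y : ℕ → ℝ := fun i => g^[i] y with hYdef
    have hYadd : ∀ i, Y (i + p) = Y i := by
      intro i
      simp only [hYdef]
      rw [Function.iterate_add_apply, hYper]
    have hYsucc : ∀ i, Y (i + 1) = g (Y i) := by
      intro i
      simp only [hYdef]
      rw [Function.iterate_succ_apply']
    have hY01 : ∀ i, Y i ∈ Icc (0:ℝ) 1 := by
      intro i
      induction i with
      | zero => exact hy01
      | succ i ih => rw [hYsucc]; exact hgm ih
    have hYmul : ∀ k, Y (k * p) = y := by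
      intro k
      induction k with
      | zero => simp [hYdef]
      | succ k ih =>
        rw [show (k+1) * p = k * p + p by ring, hYadd, ih]
    have hYnotfix : ∀ i, g (Y i) ≠ Y i := by
      intro i h
      have hconst : ∀ m, Y (i + m) = Y i := by
        intro m
        induction m with
        | zero => rfl
        | succ m ih => rw [show i + (m+1) = (i+m) + 1 by ring, hYsucc, ih, h]
      have hle : i ≤ (i+1) * p :=
        le_trans (Nat.le_succ i) (Nat.le_mul_of_pos_right (i+1) hppos)
      have h1 : Y ((i+1) * p) = y := hYmul (i+1)
      rw [show (i+1)*p = i + ((i+1)*p - i) by omega, hconst] at h1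
      rw [h1] at h
      exact hgy h
    have hYne_a : ∀ i, Y i ≠ a := by
      intro i h
      apply hYnotfix i
      rw [h, hga]
    have hYpos : ∀ i, 0 < Y i := by
      intro i
      rcases eq_or_lt_of_le (hY01 i).1 with h | h
      · exfalso; apply hYnotfix i; rw [← h, hg0]
      · exact h
    have hYlt1 : ∀ i, Y i < 1 := by
      intro i
      rcases eq_or_lt_of_le (hY01 i).2 with h | h
      · exfalso
        apply hYnotfix (i+1)
        rw [hYsucc i, h, hg1]
        exact hg0
      · exact h
    have hYne_a' : ∀ i, Y i ≠ a' := by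
      intro i h
      apply hYne_a (i+1)
      rw [hYsucc i, h, hga']
    have hgmax : ∀ t, t ∈ Icc (0:ℝ) 1 → g t ≤ g c := by
      intro t ht
      rcases le_total t c with h | h
      · exact hmono.monotoneOn ⟨ht.1, h⟩ ⟨hc0.le, le_rfl⟩ h
      · exact hanti.antitoneOn hcIcc ⟨h, ht.2⟩ h
    have hYle : ∀ i, Y i ≤ g c := by
      intro i
      have e1 : Y i = Y (i + p) := (hYadd i).symm
      rw [e1, show i + p = (i + p - 1) + 1 by omega, hYsucc]
      exact hgmax _ (hY01 _)
    have hYmod : ∀ i, Y i = Y (i % p) := by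
      intro i
      have h := periodic_ext Y p hYadd (i / p) (i % p)
      rw [Nat.mod_add_div' i p] at h
      exact h
    have hYge : ∀ i, g (g c) ≤ Y i := by
      obtain ⟨i0, hi0, hmin⟩ := Finset.exists_min_image (Finset.range p) Y
        ⟨0, Finset.mem_range.mpr hppos⟩
      have hminall : ∀ i, Y i0 ≤ Y i := by
        intro i
        rw [hYmod i]
        exact hmin (i % p) (Finset.mem_range.mpr (Nat.mod_lt _ hppos))
      intro i
      refine le_trans ?_ (hminall i)
      set j := if i0 = 0 then p - 1 else i0 - 1 with hj
      have hj1 : Y (j + 1) = Y i0 := by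
        by_cases h0 : i0 = 0
        · simp only [hj, if_pos h0]
          rw [show p - 1 + 1 = p by omega, h0]
          have := hYadd 0
          simpa using this
        · simp only [hj, if_neg h0]
          congr 1
          omega
      have hYj : a < Y j := by
        by_contra hcon
        push_neg at hcon
        have hlt : Y j < a := lt_of_le_of_ne hcon (hYne_a j)
        have hstep := signg_left (Y j) (hYpos j) hlt
        rw [← hYsucc, hj1] at hstep
        exact absurd (hminall j) (by linarith)
      rw [← hj1, hYsucc]
      exact hanti.antitoneOn ⟨(hca.trans hYj).le, (hYlt1 j).le⟩ hgcIcc (hYle j)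
    -- side transition facts (pointwise)
    have hRLpt : ∀ x, a < x → x ≤ 1 → g x < a := by
      intro x hx hx1
      have := hanti haIcc ⟨(hca.trans hx).le, hx1⟩ hx
      rwa [hga] at this
    have hLRpt : ∀ x, a' < x → x < a → a < g x := by
      intro x hx1 hx2
      rcases le_total x c with h | h
      · have := hmono ⟨ha'.1, ha'.2⟩ ⟨ha'.1.trans hx1.le, h⟩ hx1
        rwa [hga'] at this
      · have := hanti ⟨h, by linarith⟩ haIcc hx2
        rwa [hga] at this
    have hLLpt : ∀ x, 0 ≤ x → x < a' → g x < a := by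
      intro x hx0 hx
      have := hmono ⟨hx0, (hx.trans_le ha'.2).le⟩ ⟨ha'.1, ha'.2⟩ hx
      rwa [hga'] at this
    have hRL : ∀ i, a < Y i → Y (i + 1) < a := by
      intro i h
      rw [hYsucc]
      exact hRLpt _ h (hYlt1 i).le
    have hLR : ∀ i, a' < Y i → Y i < a → a < Y (i+1) := by
      intro i hh1 hh2
      rw [hYsucc]
      exact hLRpt _ hh1 hh2
    have hLLdeep : ∀ i, Y i < a → Y (i+1) < a → Y i < a' := by
      intro i hh1 hh2
      by_contra hcon
      push_neg at hcon
      have h3 : a' < Y i := lt_of_le_of_ne hcon (Ne.symm (hYne_a' i))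
      exact absurd (hLR i h3 hh1) (by linarith)
    -- d-sign for the g-orbit
    have hdY : ∀ (Q : ℕ → ℝ), (∀ i, Q (i+1) = g (Q i)) → (∀ i, 0 < Q i) →
        (∀ i, Q i < 1) → (∀ i, Q i ≠ a) →
        ∀ j, (0 < Q (j+1) - Q j ↔ Q j < a) ∧ Q (j+1) - Q j ≠ 0 := by
      intro Q hQs hQp hQ1 hQa j
      rcases lt_or_gt_of_ne (hQa j) with s | s
      · have h' : Q j < Q (j+1) := by rw [hQs]; exact signg_left _ (hQp j) s
        exact ⟨⟨fun _ => s, fun _ => by linarith⟩, by intro hh; linarith⟩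
      · have h' : Q (j+1) < Q j := by rw [hQs]; exact signg_right _ s (hQ1 j).le
        refine ⟨⟨fun hh => absurd hh (by linarith), fun hh => absurd hh (not_lt.mpr s.le)⟩,
          by intro hh; linarith⟩
    by_cases hdeep : ∃ i, i < p ∧ Y i < a'
    · -- Case (i) : there is a deep-left orbit point
      obtain ⟨j0, hj0p, hj0deep⟩ := hdeep
      have hg2c_lt_c : g (g c) < c := lt_of_le_of_lt (hYge j0) (lt_of_lt_of_le hj0deep ha'.2)
      have hcv : c ≤ v := le_trans (le_trans hca.le hgc_gt_a.le) hgcv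
      have hfcgc : g c ≤ f c := h2 c ⟨le_rfl, hca.le⟩
      have hfne : ∀ s, g (g c) ≤ s → s < a → f s ≠ s := by
        intro s hs1 hs2 h
        have := hfuniq s ⟨hs1, by linarith⟩ h
        linarith
      have fgt : ∀ t, g (g c) ≤ t → t < a → t < f t := by
        intro t ht1 ht2
        by_contra hcon
        push_neg at hcon
        have hflt : f t < t := lt_of_le_of_ne hcon (hfne t ht1 ht2)
        rcases le_total t c with hh | hh
        · have hcont' : ContinuousOn (fun s => f s - s) (Icc t c) :=
            (hf.mono (Icc_subset_Icc (hug2c.trans ht1) hcv)).sub continuousOn_id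
          obtain ⟨s, hs, hs0⟩ := intermediate_value_Icc hh hcont'
            (show (0:ℝ) ∈ Icc (f t - t) (f c - c) from
              ⟨by linarith, by linarith [hca.trans hgc_gt_a]⟩)
          have hs0' : f s - s = 0 := hs0
          exact hfne s (ht1.trans hs.1) (lt_of_le_of_lt hs.2 hca) (by linarith)
        · have hcont' : ContinuousOn (fun s => f s - s) (Icc c t) :=
            (hf.mono (Icc_subset_Icc (hug2c.trans hg2c_lt_c.le)
              (le_trans ht2.le (le_trans hgc_gt_a.le hgcv)))).sub continuousOn_id
          obtain ⟨s, hs, hs0⟩ := intermediate_value_Icc' hh hcont'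
            (show (0:ℝ) ∈ Icc (f t - t) (f c - c) from
              ⟨by linarith, by linarith [hca.trans hgc_gt_a]⟩)
          have hs0' : f s - s = 0 := hs0
          exact hfne s (hg2c_lt_c.le.trans hs.1) (lt_of_le_of_lt hs.2 ht2) (by linarith)
      -- the "hat" function η
      set η : ℝ → ℝ := fun t => sSup (Icc c a ∩ g ⁻¹' {t}) with hηdef
      have etaP : ∀ t, a < t → t ≤ g c → (η t ∈ Icc c a ∧ η t < a ∧ g (η t) = t ∧
          ∀ s, s ∈ Icc c a → g s = t → s ≤ η t) := by
        intro t hat htgc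
        have hScl : IsClosed (Icc c a ∩ g ⁻¹' {t}) :=
          ContinuousOn.preimage_isClosed_of_isClosed
            (hg.mono (Icc_subset_Icc hc0.le ha1)) isClosed_Icc isClosed_singleton
        have hSne : (Icc c a ∩ g ⁻¹' {t}).Nonempty := by
          obtain ⟨e, he, hev⟩ := intermediate_value_Icc' hca.le
            (hg.mono (Icc_subset_Icc hc0.le ha1))
            (show t ∈ Icc (g a) (g c) from ⟨by rw [hga]; exact hat.le, htgc⟩)
          exact ⟨e, he, hev⟩
        have hScp : IsCompact (Icc c a ∩ g ⁻¹' {t}) :=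
          isCompact_Icc.of_isClosed_subset hScl inter_subset_left
        have hmem : η t ∈ (Icc c a ∩ g ⁻¹' {t}) := hScp.sSup_mem hSne
        obtain ⟨hmem1, hmem2⟩ := hmem
        simp only [mem_preimage, mem_singleton_iff] at hmem2
        refine ⟨hmem1, ?_, hmem2, fun s hs hsv => le_csSup hScp.bddAbove ⟨hs, by simpa using hsv⟩⟩
        rcases eq_or_lt_of_le hmem1.2 with h | h
        · exfalso
          rw [h, hga] at hmem2
          linarith
        · exact h
      -- the shifted orbit X
      set X : ℕ → ℝ := fun i => Y (i + j0) with hXdef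
      have hXsucc : ∀ i, X (i+1) = g (X i) := by
        intro i
        simp only [hXdef]
        rw [show i + 1 + j0 = (i + j0) + 1 by ring]
        exact hYsucc (i + j0)
      have hXadd : ∀ i, X (i + p) = X i := by
        intro i
        simp only [hXdef]
        rw [show i + p + j0 = (i + j0) + p by ring]
        exact hYadd (i + j0)
      have hX0 : X 0 < a' := by
        simp only [hXdef, Nat.zero_add]
        exact hj0deep
      have hXne_a : ∀ i, X i ≠ a := fun i => hYne_a (i + j0)
      have hXne_a' : ∀ i, X i ≠ a' := fun i => hYne_a' (i + j0)
      have hXpos : ∀ i, 0 < X i := fun i => hYpos (i + j0)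
      have hXlt1 : ∀ i, X i < 1 := fun i => hYlt1 (i + j0)
      have hXge : ∀ i, g (g c) ≤ X i := fun i => hYge (i + j0)
      have hXle : ∀ i, X i ≤ g c := fun i => hYle (i + j0)
      have hXdeep : ∀ i, X i < a → X (i+1) < a → X i < a' := by
        intro i hh1 hh2
        by_contra hcon
        push_neg at hcon
        have h3 : a' < X i := lt_of_le_of_ne hcon (Ne.symm (hXne_a' i))
        have := hLRpt (X i) h3 hh1
        rw [← hXsucc] at this
        linarith
      have hXRL : ∀ i, a < X i → X (i+1) < a := by
        intro i h
        rw [hXsucc]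
        exact hRLpt _ h (hXlt1 i).le
      have hetage : ∀ k, X k < a → a < X (k+1) → X k ≤ η (X (k+1)) := by
        intro k hh1 hh2
        obtain ⟨hm, hlt, hgv, hmax⟩ := etaP (X (k+1)) hh2 (hXle (k+1))
        rcases le_total (X k) c with h | h
        · exact h.trans hm.1
        · exact hmax (X k) ⟨h, hh1.le⟩ (hXsucc k).symm
      -- the covering intervals
      set V : ℕ → ℝ × ℝ := fun j =>
        if X j < a then (if X (j+1) < a then (X j, c) else (η (X (j+1)), a)) else (a, X j)
        with hVdef
      have hVwf : ∀ j, (V j).1 ≤ (V j).2 ∧ g (g c) ≤ (V j).1 ∧ (V j).2 ≤ g c := by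
        intro j
        by_cases s0 : X j < a
        · by_cases s1 : X (j+1) < a
          · have e : V j = (X j, c) := by simp only [hVdef]; rw [if_pos s0, if_pos s1]
            rw [e]
            have hdeepj : X j < a' := hXdeep j s0 s1
            exact ⟨by show X j ≤ c; linarith [ha'c], hXge j, le_trans hca.le hgc_gt_a.le⟩
          · have e : V j = (η (X (j+1)), a) := by simp only [hVdef]; rw [if_pos s0, if_neg s1]
            rw [e]
            have hX1a : a < X (j+1) := lt_of_le_of_ne (not_lt.mp s1) (Ne.symm (hXne_a (j+1)))
            obtain ⟨hm, hlt, hgv, hmax⟩ := etaP (X (j+1)) hX1a (hXle (j+1))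
            exact ⟨hm.2, hg2c_lt_c.le.trans hm.1, hgc_gt_a.le⟩
        · have e : V j = (a, X j) := by simp only [hVdef]; rw [if_neg s0]
          rw [e]
          have hXa : a < X j := lt_of_le_of_ne (not_lt.mp s0) (Ne.symm (hXne_a j))
          exact ⟨hXa.le, hg2c_lt_a.le, hXle j⟩
      have hVsubuv : ∀ j, Icc (V j).1 (V j).2 ⊆ Icc u v :=
        fun j => Icc_subset_Icc (hug2c.trans (hVwf j).2.1) ((hVwf j).2.2.trans hgcv)
      have hVsubgc : ∀ j, Icc (V j).1 (V j).2 ⊆ Icc (g (g c)) (g c) :=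
        fun j => Icc_subset_Icc (hVwf j).2.1 (hVwf j).2.2
      have hXp0 : X p = X 0 := by
        have := hXadd 0
        simpa using this
      have hXp1 : X (p+1) = X 1 := by
        have := hXadd 1
        rwa [show 1 + p = p + 1 by ring] at this
      have hVp0 : V p = V 0 := by
        simp only [hVdef]
        rw [hXp0, hXp1]
      have hLsub : ∀ k, X k < a → Icc (V k).1 (V k).2 ⊆ Icc (X k) a := by
        intro k s1
        by_cases s2 : X (k+1) < a
        · have e2 : V k = (X k, c) := by simp only [hVdef]; rw [if_pos s1, if_pos s2]
          rw [e2]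
          exact Icc_subset_Icc le_rfl (by linarith [hca])
        · have hX2a : a < X (k+1) := lt_of_le_of_ne (not_lt.mp s2) (Ne.symm (hXne_a _))
          have e2 : V k = (η (X (k+1)), a) := by simp only [hVdef]; rw [if_pos s1, if_neg s2]
          rw [e2]
          exact Icc_subset_Icc (hetage k s1 hX2a) le_rfl
      have hcov : ∀ j, j < p → Icc (V (j+1)).1 (V (j+1)).2 ⊆ uIcc (f (V j).1) (f (V j).2) := by
        intro j _
        by_cases s0 : X j < a
        · by_cases s1 : X (j+1) < a
          · have e : V j = (X j, c) := by simp only [hVdef]; rw [if_pos s0, if_pos s1]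
            have hdeepj : X j < a' := hXdeep j s0 s1
            have hf1 : f (X j) ≤ X (j+1) := by
              rw [hXsucc]
              exact h1 (X j) ⟨hXge j, hdeepj.le⟩
            rw [e]
            show Icc (V (j+1)).1 (V (j+1)).2 ⊆ uIcc (f (X j)) (f c)
            have hord : f (X j) ≤ f c := by linarith [hca.trans hgc_gt_a]
            rw [uIcc_of_le hord]
            refine (hLsub (j+1) s1).trans ?_
            exact Icc_subset_Icc hf1 (by linarith [hca.trans hgc_gt_a])
          · have e : V j = (η (X (j+1)), a) := by simp only [hVdef]; rw [if_pos s0, if_neg s1]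
            have hX1a : a < X (j+1) := lt_of_le_of_ne (not_lt.mp s1) (Ne.symm (hXne_a (j+1)))
            obtain ⟨hm, hlt, hgv, hmax⟩ := etaP (X (j+1)) hX1a (hXle (j+1))
            have hfη : X (j+1) ≤ f (η (X (j+1))) := by
              have hh := h2 (η (X (j+1))) hm
              rw [hgv] at hh
              exact hh
            have hford : f a ≤ f (η (X (j+1))) := by
              rw [hfa]
              exact le_trans hX1a.le hfη
            rw [e]
            show Icc (V (j+1)).1 (V (j+1)).2 ⊆ uIcc (f (η (X (j+1)))) (f a)
            rw [uIcc_of_ge hford]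
            have e2 : V (j+1) = (a, X (j+1)) := by simp only [hVdef]; rw [if_neg s1]
            rw [e2]
            exact Icc_subset_Icc (le_of_eq hfa) hfη
        · have e : V j = (a, X j) := by simp only [hVdef]; rw [if_neg s0]
          have hXa : a < X j := lt_of_le_of_ne (not_lt.mp s0) (Ne.symm (hXne_a j))
          have s1 : X (j+1) < a := hXRL j hXa
          have hf1 : f (X j) ≤ X (j+1) := by
            rw [hXsucc]
            exact h3 (X j) ⟨hXa.le, hXle j⟩
          have hford : f (X j) ≤ f a := by
            rw [hfa]
            linarith
          rw [e]
          show Icc (V (j+1)).1 (V (j+1)).2 ⊆ uIcc (f a) (f (X j))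
          rw [uIcc_of_ge hford]
          refine (hLsub (j+1) s1).trans ?_
          exact Icc_subset_Icc hf1 (le_of_eq hfa.symm)
      -- run the chain
      obtain ⟨z, hzp, hzit⟩ := chain hf hfm p hppos V (fun j _ => (hVwf j).1)
        (fun j _ => hVsubuv j) hVp0 hcov
      set Z : ℕ → ℝ := fun j => f^[j] z with hZdef
      have hZsucc : ∀ j, Z (j+1) = f (Z j) := fun j => Function.iterate_succ_apply' f j z
      have hZadd : ∀ j, Z (j + p) = Z j := by
        intro j
        simp only [hZdef]
        rw [Function.iterate_add_apply, hzp]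
      have hX0a : X 0 < a := by linarith [ha'c, hca]
      have hX1a : X 1 < a := by
        rw [hXsucc]
        exact hLLpt (X 0) (hXpos 0).le hX0
      have hV0 : V 0 = (X 0, c) := by
        simp only [hVdef]
        rw [if_pos hX0a, if_pos hX1a]
      have hzmem0 : z ∈ Icc (X 0) c := by
        have hh := hzit 0 (by omega)
        rw [hV0] at hh
        exact hh
      have hza : z ≠ a := by
        intro h
        rw [h] at hzmem0
        linarith [hzmem0.2, hca]
      have hZne : ∀ j, Z j ≠ a := by
        intro j h
        have hconst : ∀ m, Z (j + m) = a := by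
          intro m
          induction m with
          | zero => simpa using h
          | succ m ih => rw [show j + (m+1) = (j + m) + 1 by ring, hZsucc, ih, hfa]
        have hmul : ∀ k, Z (k * p) = z := by
          intro k
          induction k with
          | zero => simp [hZdef]
          | succ k ih => rw [show (k+1) * p = k * p + p by ring, hZadd, ih]
        have hle : j ≤ (j+1) * p :=
          le_trans (Nat.le_succ j) (Nat.le_mul_of_pos_right (j+1) hppos)
        have hfin := hconst ((j+1) * p - j)
        rw [show j + ((j+1)*p - j) = (j+1)*p by omega, hmul (j+1)] at hfin
        exact hza hfin
      have hzfix : f z ≠ z := by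
        intro h
        have hmem : z ∈ Icc (g (g c)) (g c) :=
          ⟨(hXge 0).trans hzmem0.1, hzmem0.2.trans (hca.trans hgc_gt_a).le⟩
        exact hza (hfuniq z hmem h)
      have hsZ : ∀ j, j ≤ p → (Z j < a ↔ X j < a) := by
        intro j hj
        have hmem := hzit j hj
        by_cases sj : X j < a
        · constructor
          · intro _
            exact sj
          · intro _
            by_cases sj1 : X (j+1) < a
            · have e : V j = (X j, c) := by simp only [hVdef]; rw [if_pos sj, if_pos sj1]
              rw [e] at hmem
              exact lt_of_le_of_lt hmem.2 hca
            · have e : V j = (η (X (j+1)), a) := by simp only [hVdef]; rw [if_pos sj, if_neg sj1]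
              rw [e] at hmem
              exact lt_of_le_of_ne hmem.2 (hZne j)
        · constructor
          · intro h
            exfalso
            have e : V j = (a, X j) := by simp only [hVdef]; rw [if_neg sj]
            rw [e] at hmem
            exact absurd hmem.1 (not_le.mpr h)
          · intro h
            exact absurd h sj
      have hdZne : ∀ j, j ≤ p → Z (j+1) - Z j ≠ 0 := by
        intro j hj h
        have hfix : f (Z j) = Z j := by
          rw [← hZsucc]
          linarith
        have hmem := hVsubgc j (hzit j hj)
        exact hZne j (hfuniq (Z j) hmem hfix)
      have hdZsign : ∀ j, j < p → (0 < Z (j+1) - Z j ↔ X j < a) := by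
        intro j hj
        by_cases s0 : X j < a
        · by_cases s1 : X (j+1) < a
          · have e : V j = (X j, c) := by simp only [hVdef]; rw [if_pos s0, if_pos s1]
            have hmem := hzit j hj.le
            rw [e] at hmem
            have h1' : Z j < f (Z j) :=
              fgt (Z j) (le_trans (hXge j) hmem.1) (lt_of_le_of_lt hmem.2 hca)
            rw [← hZsucc] at h1'
            exact ⟨fun _ => s0, fun _ => by linarith⟩
          · have hZj : Z j < a := (hsZ j hj.le).mpr s0
            have hZj1 : a < Z (j+1) := by
              have hnlt : ¬ (Z (j+1) < a) := fun hh => s1 ((hsZ (j+1) (by omega)).mp hh)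
              exact lt_of_le_of_ne (not_lt.mp hnlt) (Ne.symm (hZne (j+1)))
            exact ⟨fun _ => s0, fun _ => by linarith⟩
        · have hXa : a < X j := lt_of_le_of_ne (not_lt.mp s0) (Ne.symm (hXne_a j))
          have s1 : X (j+1) < a := hXRL j hXa
          have hZj : a < Z j := by
            have hnlt : ¬ (Z j < a) := fun hh => s0 ((hsZ j hj.le).mp hh)
            exact lt_of_le_of_ne (not_lt.mp hnlt) (Ne.symm (hZne j))
          have hZj1 : Z (j+1) < a := (hsZ (j+1) (by omega)).mpr s1
          exact ⟨fun hh => absurd hh (by linarith), fun hh => absurd hh s0⟩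
      have hZp0 : Z p = Z 0 := hzp
      have hdZ' : ∀ j, j ≤ p → (0 < Z (j+1) - Z j ↔ X j < a) ∧ Z (j+1) - Z j ≠ 0 := by
        intro j hj
        refine ⟨?_, hdZne j hj⟩
        rcases eq_or_lt_of_le hj with hje | hjl
        · rw [hje]
          have e1 : Z (p+1) = Z 1 := by
            rw [show p + 1 = 1 + p by ring]
            exact hZadd 1
          rw [e1, hZp0, hXp0]
          exact hdZsign 0 hppos
        · exact hdZsign j hjl
      have hdX := hdY X hXsucc hXpos hXlt1 hXne_a
      have hterm : ∀ i, i < p → chi f (Z i) = chi g (X i) := by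
        intro i hi
        apply chi_eq_chi
        have ef1 : f (Z i) = Z (i+1) := (hZsucc i).symm
        have eg1 : g (X i) = X (i+1) := (hXsucc i).symm
        rw [ef1, eg1]
        have ef2 : f (Z (i+1)) = Z (i+1+1) := (hZsucc (i+1)).symm
        have eg2 : g (X (i+1)) = X (i+1+1) := (hXsucc (i+1)).symm
        rw [ef2, eg2]
        have d1 := hdZ' i hi.le
        have d2 := hdZ' (i+1) (by omega)
        have e1 := hdX i
        have e2 := hdX (i+1)
        rw [prod_nonpos_iff d1.1 d1.2 d2.1 d2.2, prod_nonpos_iff e1.1 e1.2 e2.1 e2.2]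
      have hsum1 : ∑ i ∈ Finset.range p, chi f (Z i) = ∑ i ∈ Finset.range p, chi g (X i) :=
        Finset.sum_congr rfl (fun i hi => hterm i (Finset.mem_range.mp hi))
      have hsum2 : ∑ i ∈ Finset.range p, chi g (X i) = ∑ i ∈ Finset.range p, chi g (Y i) :=
        sum_shift (fun i => chi g (Y i)) p
          (fun i => by show chi g (Y (i + p)) = chi g (Y i); rw [hYadd]) j0
      have hzper : Function.IsPeriodicPt f p z := hzp
      have hzmem : z ∈ Function.periodicPts f := Function.mk_mem_periodicPts hppos hzper
      have hzuv : z ∈ Icc u v :=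
        ⟨hug2c.trans ((hXge 0).trans hzmem0.1), hzmem0.2.trans hcv⟩
      set q := Function.minimalPeriod f z with hqdef
      have hqpos : 0 < q := Function.minimalPeriod_pos_of_mem_periodicPts hzmem
      obtain ⟨m, hmq⟩ := Function.IsPeriodicPt.minimalPeriod_dvd hzper
      have hqper : f^[q] z = z := Function.iterate_minimalPeriod
      have hchiq : ∀ i, chi f (Z (i + q)) = chi f (Z i) := by
        intro i
        have hZq : Z (i + q) = Z i := by
          simp only [hZdef]
          rw [Function.iterate_add_apply, hqper]
        rw [hZq]
      have hmpos : 0 < m := by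
        rcases Nat.eq_zero_or_pos m with h | h
        · rw [h, Nat.mul_zero] at hmq
          omega
        · exact h
      have hsum3 : ∑ i ∈ Finset.range p, chi f (Z i) = m * ∑ i ∈ Finset.range q, chi f (Z i) := by
        rw [hmq, show q * m = m * q by ring]
        exact sum_mul_period (fun i => chi f (Z i)) q hchiq m
      refine ⟨z, hzuv, hzmem, hzfix, ?_⟩
      rw [← hrot]
      unfold overRotNum
      rw [← hpdef, ← hqdef]
      show (∑ i ∈ Finset.range q, chi f (Z i)) / (q:ℝ)
        = (∑ i ∈ Finset.range p, chi g (Y i)) / (p:ℝ)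
      rw [← hsum2, ← hsum1, hsum3, hmq]
      have hqne : (q:ℝ) ≠ 0 := Nat.cast_ne_zero.mpr (by omega)
      have hmne : (m:ℝ) ≠ 0 := Nat.cast_ne_zero.mpr (by omega)
      push_cast
      field_simp
      rw [← hqdef, mul_div_cancel_right₀ _ hqne]
    · -- Case (ii) : alternating orbit, over-rotation number 1/2
      push_neg at hdeep
      have hdeep' : ∀ i, a' < Y i := by
        intro i
        rw [hYmod i]
        exact lt_of_le_of_ne (hdeep (i % p) (Nat.mod_lt _ hppos)) (Ne.symm (hYne_a' (i % p)))
      have halt : ∀ i, Y i < a → a < Y (i+1) := fun i h => hLR i (hdeep' i) h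
      have hterm : ∀ i, chi g (Y i) = 1/2 := by
        intro i
        have e1 : g (Y i) = Y (i+1) := (hYsucc i).symm
        unfold chi
        rw [e1]
        have e2 : g (Y (i+1)) = Y (i+1+1) := (hYsucc (i+1)).symm
        rw [e2]
        have hcond : (Y (i+1) - Y i) * (Y (i+1+1) - Y (i+1)) ≤ 0 := by
          rcases lt_or_gt_of_ne (hYne_a i) with s1 | s1
          · have hd1 := signg_left (Y i) (hYpos i) s1
            rw [← hYsucc] at hd1
            have s2 := halt i s1
            have hd2 := signg_right (Y (i+1)) s2 (hYlt1 (i+1)).le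
            rw [← hYsucc] at hd2
            nlinarith
          · have hd1 := signg_right (Y i) s1 (hYlt1 i).le
            rw [← hYsucc] at hd1
            have s2 := hRL i s1
            have hd2 := signg_left (Y (i+1)) (hYpos (i+1)) s2
            rw [← hYsucc] at hd2
            nlinarith
        rw [if_pos hcond]
      have hpne : (p:ℝ) ≠ 0 := Nat.cast_ne_zero.mpr (by omega)
      have hrval : r = 1/2 := by
        rw [← hrot]
        unfold overRotNum
        rw [← hpdef]
        rw [Finset.sum_congr rfl (fun i _ => hterm i)]
        rw [Finset.sum_const, Finset.card_range, nsmul_eq_mul]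
        field_simp
      -- construct a flip point for f
      set m1 := max c (g (g c)) with hm1def
      have hm1a : m1 < a := max_lt hca hg2c_lt_a
      have hm1u : u ≤ m1 := hug2c.trans (le_max_right _ _)
      have hm1c : c ≤ m1 := le_max_left _ _
      have hg2m1 : g (g c) ≤ m1 := le_max_right _ _
      have hm1v : m1 ≤ v := le_trans (le_trans hm1a.le hgc_gt_a.le) hgcv
      have hconta : ContinuousOn f (Icc m1 a) := hf.mono (Icc_subset_Icc hm1u hauv.2)
      have hflip : ∃ x0, x0 ∈ Icc u v ∧ x0 < f x0 ∧ f (f x0) ≤ x0 := by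
        by_cases hhigh : ∃ t, t ∈ Icc m1 a ∧ g c ≤ f t
        · obtain ⟨t, ht, htv⟩ := hhigh
          have hcont' : ContinuousOn f (Icc t a) := hconta.mono (Icc_subset_Icc ht.1 le_rfl)
          obtain ⟨x0, hx0, hx0v⟩ := intermediate_value_Icc' ht.2 hcont'
            (show g c ∈ Icc (f a) (f t) from ⟨by rw [hfa]; exact hgc_gt_a.le, htv⟩)
          refine ⟨x0, ⟨hm1u.trans (ht.1.trans hx0.1), hx0.2.trans hauv.2⟩, ?_, ?_⟩
          · rw [hx0v]
            exact lt_of_le_of_lt hx0.2 hgc_gt_a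
          · rw [hx0v]
            have hle := h3 (g c) ⟨hgc_gt_a.le, le_rfl⟩
            have : m1 ≤ x0 := ht.1.trans hx0.1
            linarith
        · push_neg at hhigh
          by_cases hmidc : ∃ t0, (t0 ∈ Ico m1 a) ∧ ∃ w, w ∈ Ioc a (g c) ∧ g w = t0 ∧ w ≤ f t0
          · obtain ⟨t0, ht0, w, hw, hgw, hwf⟩ := hmidc
            refine ⟨t0, ⟨hm1u.trans ht0.1, ht0.2.le.trans hauv.2⟩, ?_, ?_⟩
            · calc t0 < a := ht0.2
                _ < w := hw.1
                _ ≤ f t0 := hwf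
            · have hft0 : f t0 ∈ Icc a (g c) :=
                ⟨hw.1.le.trans hwf, (hhigh t0 ⟨ht0.1, ht0.2.le⟩).le⟩
              have e1 : f (f t0) ≤ g (f t0) := h3 (f t0) hft0
              have e2 : g (f t0) ≤ g w := hanti.antitoneOn
                ⟨hca.le.trans hw.1.le, hw.2.trans hgc01.2⟩
                ⟨hca.le.trans hft0.1, hft0.2.trans hgc01.2⟩ hwf
              rw [hgw] at e2
              linarith
          · exfalso
            push_neg at hmidc
            have hg2 : ∀ t, t ∈ Ico m1 a → t < g (g t) := by
              intro t ht
              have hgagc : ContinuousOn g (Icc a (g c)) :=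
                hg.mono (Icc_subset_Icc (by linarith) hgc01.2)
              obtain ⟨w, hwmem, hwval⟩ := intermediate_value_Icc' hgc_gt_a.le hgagc
                (show t ∈ Icc (g (g c)) (g a) from
                  ⟨le_trans hg2m1 ht.1, by rw [hga]; exact ht.2.le⟩)
              have hwa : a < w := by
                rcases eq_or_lt_of_le hwmem.1 with h | h
                · exfalso
                  rw [← h, hga] at hwval
                  exact absurd hwval.symm (by intro hh; rw [hh] at ht; exact absurd ht.2 (lt_irrefl a))
                · exact h
              have hfw := hmidc t ht w ⟨hwa, hwmem.2⟩ hwval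
              have hgt_le : g t ≤ f t := h2 t ⟨hm1c.trans ht.1, ht.2.le⟩
              have hgtw : g t < w := lt_of_le_of_lt hgt_le hfw
              have hgta : a < g t := by
                have := hanti ⟨hm1c.trans ht.1, ht.2.le.trans ha1⟩ haIcc ht.2
                rwa [hga] at this
              have ht01 : t ∈ Icc (0:ℝ) 1 := ⟨by linarith [hm1c.trans ht.1], by linarith [ht.2]⟩
              have := hanti
                ⟨hca.le.trans hgta.le, (hgmax t ht01).trans hgc01.2⟩
                ⟨hca.le.trans hwa.le, hwmem.2.trans hgc01.2⟩ hgtw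
              rwa [hwval] at this
            have hleft : ∃ i, i < p ∧ Y i < a := by
              rcases lt_or_gt_of_ne (hYne_a 0) with h | h
              · exact ⟨0, hppos, h⟩
              · exact ⟨1, by omega, hRL 0 h⟩
            obtain ⟨i1, hi1p, hi1⟩ := hleft
            set LS := (Finset.range p).filter (fun i => Y i < a) with hLS
            have hLSne : LS.Nonempty :=
              ⟨i1, Finset.mem_filter.mpr ⟨Finset.mem_range.mpr hi1p, hi1⟩⟩
            obtain ⟨iM, hiM, hmax⟩ := Finset.exists_max_image LS Y hLSne
            have hYiM : Y iM < a := (Finset.mem_filter.mp hiM).2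
            have hkey : Y iM < g (g (Y iM)) := by
              rcases le_or_gt m1 (Y iM) with hcase2 | hcase2
              · exact hg2 (Y iM) ⟨hcase2, hYiM⟩
              · have hccase : g (g c) ≤ c := by
                  by_contra hcc
                  push_neg at hcc
                  have he : m1 = g (g c) := max_eq_right hcc.le
                  rw [he] at hcase2
                  exact absurd (hYge iM) (by linarith)
                have hm1c' : m1 = c := max_eq_left hccase
                have hYiMc : Y iM < c := by rwa [hm1c'] at hcase2
                have hYm1 : a < Y (iM + 1) := hLR iM (hdeep' iM) hYiM
                have hYm1le : Y (iM+1) ≤ g c := hYle (iM+1)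
                obtain ⟨e0, he0, he0v⟩ := intermediate_value_Icc' hca.le
                  (hg.mono (Icc_subset_Icc hc0.le ha1))
                  (show Y (iM+1) ∈ Icc (g a) (g c) from ⟨by rw [hga]; exact hYm1.le, hYm1le⟩)
                have he0a : e0 < a := by
                  rcases eq_or_lt_of_le he0.2 with hh | hh
                  · exfalso
                    rw [hh, hga] at he0v
                    exact (hYne_a (iM+1)) he0v.symm
                  · exact hh
                have hg2e : e0 < g (g e0) := hg2 e0 ⟨by rw [hm1c']; exact he0.1, he0a⟩
                rw [he0v] at hg2e
                calc Y iM < c := hYiMc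
                  _ ≤ e0 := he0.1
                  _ < g (Y (iM+1)) := hg2e
                  _ = g (g (Y iM)) := by rw [hYsucc]
            have hY2eq : g (g (Y iM)) = Y (iM + 1 + 1) := by rw [hYsucc, hYsucc]
            have hside2 : Y (iM + 1 + 1) < a := hRL (iM+1) (hLR iM (hdeep' iM) hYiM)
            have hmem2 : (iM + 1 + 1) % p ∈ LS := Finset.mem_filter.mpr
              ⟨Finset.mem_range.mpr (Nat.mod_lt _ hppos), by
                rw [← hYmod (iM+1+1)]
                exact hside2⟩
            have hle2 := hmax _ hmem2
            rw [← hYmod (iM+1+1)] at hle2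
            rw [hY2eq] at hkey
            linarith
      obtain ⟨x0, hx0uv, hflt, hffle⟩ := hflip
      obtain ⟨z, hzuv, hz2, hzne⟩ := BC hf hfm hx0uv hflt hffle
      have hzper : Function.IsPeriodicPt f 2 z := by
        show f^[2] z = z
        rw [show (2:ℕ) = 1 + 1 from rfl, Function.iterate_add_apply]
        simpa using hz2
      have hzmem : z ∈ Function.periodicPts f := Function.mk_mem_periodicPts (by omega) hzper
      have hq2 : Function.minimalPeriod f z = 2 := by
        have hd : Function.minimalPeriod f z ∣ 2 := Function.IsPeriodicPt.minimalPeriod_dvd hzper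
        have hne1 : Function.minimalPeriod f z ≠ 1 :=
          fun h => hzne (Function.minimalPeriod_eq_one_iff_isFixedPt.mp h)
        have hpos : 0 < Function.minimalPeriod f z :=
          Function.minimalPeriod_pos_of_mem_periodicPts hzmem
        have hle2' : Function.minimalPeriod f z ≤ 2 := Nat.le_of_dvd (by norm_num) hd
        omega
      refine ⟨z, hzuv, hzmem, hzne, ?_⟩
      unfold overRotNum
      rw [hq2]
      rw [Finset.sum_range_succ, Finset.sum_range_one]
      simp only [Function.iterate_zero_apply, Function.iterate_one]
      obtain ⟨c1, c2⟩ := chi_half_of_two_cycle hz2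
      rw [c1, c2, hrval]
      norm_num
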